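/- Let λ ≠ 0 and let γ be the standard Gaussian measure on ℝ (mean 0, variance 1). Then the pushforward of γ under the map x ↦ x²/(λ² + x²) is the measure on (0,1) with density f_{Z^λ}: for every Borel set S ⊆ ℝ, γ({ x : x²/(λ² + x²) ∈ S }) = ∫_{S ∩ (0,1)} (|λ| / √(2π t (1−t)³)) · exp(−λ² t / (2(1−t))) dt. -/

import Mathlib

open MeasureTheory ProbabilityTheory Real

/-- if `B₁` is standard normal, then `B₁²/(λ² + B₁²)` has density
`f_{Z^λ}` on `(0,1)`: the standard Gaussian measure of
`{x : x²/(λ²+x²) ∈ S}` equals `∫_{S ∩ (0,1)} f_{Z^λ}(t) dt` for every Borel `S`. -/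
theorem gaussian_pushforward_fZ (lam : ℝ) (hlam : lam ≠ 0) (S : Set ℝ)
    (hS : MeasurableSet S) :
    gaussianReal 0 1 {x : ℝ | x ^ 2 / (lam ^ 2 + x ^ 2) ∈ S} =
      ENNReal.ofReal
        (∫ t in S ∩ Set.Ioo (0 : ℝ) 1,
          |lam| / Real.sqrt (2 * π * t * (1 - t) ^ 3) *
            Real.exp (-(lam ^ 2 * t) / (2 * (1 - t)))) := by
  have hl2 : (0:ℝ) < lam ^ 2 := by positivity
  have hlabs : (0:ℝ) < |lam| := abs_pos.mpr hlam
  set A : Set ℝ := {x : ℝ | x ^ 2 / (lam ^ 2 + x ^ 2) ∈ S} with hA_def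
  have hden : ∀ x : ℝ, (0:ℝ) < lam ^ 2 + x ^ 2 := fun x => by positivity
  have hgc : Continuous fun x : ℝ => x ^ 2 / (lam ^ 2 + x ^ 2) :=
    (continuous_pow 2).div (continuous_const.add (continuous_pow 2))
      fun x => (hden x).ne'
  have hA : MeasurableSet A := hgc.measurable hS
  -- the substitution map
  set h : ℝ → ℝ := fun t => |lam| * Real.sqrt (t / (1 - t)) with hh_def
  set h' : ℝ → ℝ := fun t =>
    |lam| * (1 / (2 * Real.sqrt (t / (1 - t))) * ((1 - t) ^ 2)⁻¹) with hh'_def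
  have hs_meas : MeasurableSet (S ∩ Set.Ioo (0:ℝ) 1) :=
    hS.inter measurableSet_Ioo
  -- derivative of h on (0,1)
  have hderiv : ∀ t ∈ S ∩ Set.Ioo (0:ℝ) 1,
      HasDerivWithinAt h (h' t) (S ∩ Set.Ioo (0:ℝ) 1) t := by
    intro t ht
    obtain ⟨-, ht0, ht1⟩ := ht
    have h1t : (0:ℝ) < 1 - t := by linarith
    have hu : (0:ℝ) < t / (1 - t) := div_pos ht0 h1t
    have hu' : HasDerivAt (fun t : ℝ => t / (1 - t)) (((1 - t) ^ 2)⁻¹) t := by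
      have := (hasDerivAt_id t).div ((hasDerivAt_const t 1).sub (hasDerivAt_id t)) h1t.ne'
      rw [show ((1 - t) ^ 2)⁻¹ = (1 * (1 - t) - t * (0 - 1)) / (1 - t) ^ 2 by ring]
      exact this
    have hsq : HasDerivAt (fun t : ℝ => Real.sqrt (t / (1 - t)))
        (1 / (2 * Real.sqrt (t / (1 - t))) * ((1 - t) ^ 2)⁻¹) t :=
      (Real.hasDerivAt_sqrt hu.ne').comp t hu'
    exact ((hsq.const_mul |lam|).hasDerivWithinAt)
  -- injectivity of h on (0,1)
  have hinj : Set.InjOn h (S ∩ Set.Ioo (0:ℝ) 1) := by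
    intro a ha b hb hab
    obtain ⟨-, ha0, ha1⟩ := ha
    obtain ⟨-, hb0, hb1⟩ := hb
    have h1a : (0:ℝ) < 1 - a := by linarith
    have h1b : (0:ℝ) < 1 - b := by linarith
    have h2 : Real.sqrt (a / (1 - a)) = Real.sqrt (b / (1 - b)) := by
      exact mul_left_cancel₀ hlabs.ne' hab
    have h3 : a / (1 - a) = b / (1 - b) := by
      have := congrArg (fun x => x ^ 2) h2
      simpa [Real.sq_sqrt (div_pos ha0 h1a).le,
        Real.sq_sqrt (div_pos hb0 h1b).le] using this
    field_simp at h3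
    nlinarith
  -- image identification
  have himg : A ∩ Set.Ioi (0:ℝ) = h '' (S ∩ Set.Ioo (0:ℝ) 1) := by
    ext x
    constructor
    · rintro ⟨hxA, hx0⟩
      have hx0' : (0:ℝ) < x := hx0
      set t := x ^ 2 / (lam ^ 2 + x ^ 2) with ht_def
      have ht0 : 0 < t := div_pos (by positivity) (hden x)
      have ht1 : t < 1 := by
        rw [ht_def, div_lt_one (hden x)]; nlinarith
      refine ⟨t, ⟨hxA, ht0, ht1⟩, ?_⟩
      have h1t : (0:ℝ) < 1 - t := by linarith
      have hts : t / (1 - t) = x ^ 2 / lam ^ 2 := by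
        rw [ht_def]
        field_simp
        ring
      rw [hh_def]
      simp only
      rw [hts, Real.sqrt_div (by positivity), Real.sqrt_sq hx0'.le,
        Real.sqrt_sq_eq_abs]
      field_simp
    · rintro ⟨t, ⟨htS, ht0, ht1⟩, rfl⟩
      have h1t : (0:ℝ) < 1 - t := by linarith
      have hu : (0:ℝ) < t / (1 - t) := div_pos ht0 h1t
      have hx0 : 0 < h t := mul_pos hlabs (Real.sqrt_pos.mpr hu)
      have hsq : (h t) ^ 2 = lam ^ 2 * (t / (1 - t)) := by
        rw [hh_def]
        simp only
        rw [mul_pow, sq_abs, Real.sq_sqrt hu.le]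
      constructor
      · show (h t) ^ 2 / (lam ^ 2 + (h t) ^ 2) ∈ S
        have : (h t) ^ 2 / (lam ^ 2 + (h t) ^ 2) = t := by
          rw [hsq]
          field_simp
          ring
        rwa [this]
      · exact hx0
  -- symmetry: negative part
  have hneg_img : A ∩ Set.Iio (0:ℝ) = (fun x : ℝ => -x) '' (A ∩ Set.Ioi (0:ℝ)) := by
    ext x
    simp only [Set.mem_inter_iff, Set.mem_Iio, Set.mem_Ioi, Set.mem_image]
    constructor
    · rintro ⟨hxA, hx0⟩
      refine ⟨-x, ⟨?_, by linarith⟩, by ring⟩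
      have : (-x) ^ 2 / (lam ^ 2 + (-x) ^ 2) = x ^ 2 / (lam ^ 2 + x ^ 2) := by ring_nf
      show -x ∈ A
      simp only [hA_def, Set.mem_setOf_eq, this]
      exact hxA
    · rintro ⟨y, ⟨hyA, hy0⟩, rfl⟩
      refine ⟨?_, by linarith⟩
      have : (-y) ^ 2 / (lam ^ 2 + (-y) ^ 2) = y ^ 2 / (lam ^ 2 + y ^ 2) := by ring_nf
      show -y ∈ A
      simp only [hA_def, Set.mem_setOf_eq, this]
      exact hyA
  have hpdf_int : Integrable (gaussianPDFReal 0 1) := integrable_gaussianPDFReal 0 1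
  have hApos : MeasurableSet (A ∩ Set.Ioi (0:ℝ)) := hA.inter measurableSet_Ioi
  -- split the integral over A
  have hae : (A : Set ℝ) =ᵐ[(volume : Measure ℝ)]
      ((A ∩ Set.Iio 0 ∪ A ∩ Set.Ioi 0 : Set ℝ)) := by
    have h0 : ∀ᵐ x : ℝ, x ≠ 0 := by
      rw [ae_iff]
      simp
    rw [Filter.eventuallyEq_set]
    filter_upwards [h0] with x hx
    simp only [Set.mem_union, Set.mem_inter_iff, Set.mem_Iio, Set.mem_Ioi]
    rcases lt_or_gt_of_ne hx with h | h <;> tauto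
  have hsplit : ∫ x in A, gaussianPDFReal 0 1 x
      = (∫ x in A ∩ Set.Iio 0, gaussianPDFReal 0 1 x)
        + ∫ x in A ∩ Set.Ioi 0, gaussianPDFReal 0 1 x := by
    rw [setIntegral_congr_set hae, setIntegral_union]
    · exact Set.disjoint_of_subset (Set.inter_subset_right)
        (Set.inter_subset_right) ((Set.Iic_disjoint_Ioi (le_refl (0:ℝ))).mono_left Set.Iio_subset_Iic_self)
    · exact hApos
    · exact hpdf_int.integrableOn
    · exact hpdf_int.integrableOn
  -- negative part equals positive part
  have hneg_eq : ∫ x in A ∩ Set.Iio 0, gaussianPDFReal 0 1 x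
      = ∫ x in A ∩ Set.Ioi 0, gaussianPDFReal 0 1 x := by
    rw [hneg_img, integral_image_eq_integral_abs_deriv_smul hApos
      (fun x _ => (hasDerivAt_neg x).hasDerivWithinAt) (neg_injective.injOn)]
    refine setIntegral_congr_fun hApos fun x _ => ?_
    simp [gaussianPDFReal, neg_sub]
  -- positive part via change of variables
  have hpos_eq : ∫ x in A ∩ Set.Ioi 0, gaussianPDFReal 0 1 x
      = ∫ t in S ∩ Set.Ioo (0:ℝ) 1, |h' t| • gaussianPDFReal 0 1 (h t) := by
    rw [himg, integral_image_eq_integral_abs_deriv_smul hs_meas hderiv hinj]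
  -- pointwise identity on (0,1)
  have hpoint : ∀ t ∈ S ∩ Set.Ioo (0:ℝ) 1,
      |lam| / Real.sqrt (2 * π * t * (1 - t) ^ 3) *
          Real.exp (-(lam ^ 2 * t) / (2 * (1 - t)))
        = 2 * (|h' t| • gaussianPDFReal 0 1 (h t)) := by
    intro t ht
    obtain ⟨-, ht0, ht1⟩ := ht
    have h1t : (0:ℝ) < 1 - t := by linarith
    have hu : (0:ℝ) < t / (1 - t) := div_pos ht0 h1t
    have hsqu : (0:ℝ) < Real.sqrt (t / (1 - t)) := Real.sqrt_pos.mpr hu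
    have hh'pos : 0 < h' t := by
      rw [hh'_def]
      positivity
    have hsq : (h t) ^ 2 = lam ^ 2 * (t / (1 - t)) := by
      rw [hh_def]; simp only
      rw [mul_pow, sq_abs, Real.sq_sqrt hu.le]
    have hexp : -(h t - 0) ^ 2 / (2 * (1:ℝ)) = -(lam ^ 2 * t) / (2 * (1 - t)) := by
      rw [sub_zero, hsq]
      field_simp
    have hpdf : gaussianPDFReal 0 1 (h t)
        = (Real.sqrt (2 * π))⁻¹ * Real.exp (-(lam ^ 2 * t) / (2 * (1 - t))) := by
      rw [gaussianPDFReal]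
      push_cast
      rw [mul_one, hexp]
    rw [smul_eq_mul, hpdf, abs_of_pos hh'pos]
    have hb : Real.sqrt (1 - t) * Real.sqrt (1 - t) = 1 - t :=
      Real.mul_self_sqrt h1t.le
    have ha : Real.sqrt t * Real.sqrt t = t := Real.mul_self_sqrt ht0.le
    have hsqrt3 : Real.sqrt (2 * π * t * (1 - t) ^ 3)
        = Real.sqrt (2 * π) * Real.sqrt t * ((1 - t) * Real.sqrt (1 - t)) := by
      rw [show (2:ℝ) * π * t * (1 - t) ^ 3 = (2 * π) * (t * ((1-t)^2 * (1-t))) by ring,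
        Real.sqrt_mul (by positivity), Real.sqrt_mul ht0.le,
        Real.sqrt_mul (sq_nonneg _), Real.sqrt_sq h1t.le]
      ring
    have hsqdiv : Real.sqrt (t / (1 - t)) = Real.sqrt t / Real.sqrt (1 - t) :=
      Real.sqrt_div ht0.le _
    rw [hsqrt3, hh'_def]
    simp only
    rw [hsqdiv]
    have hat : (0:ℝ) < Real.sqrt t := Real.sqrt_pos.mpr ht0
    have hbt : (0:ℝ) < Real.sqrt (1 - t) := Real.sqrt_pos.mpr h1t
    have hc : (0:ℝ) < Real.sqrt (2 * π) := Real.sqrt_pos.mpr (by positivity)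
    rw [div_mul_eq_mul_div, div_eq_iff (by positivity)]
    field_simp
    linear_combination
      (-1 : ℝ) * hb
  -- put everything together
  have hfinal : ∫ x in A, gaussianPDFReal 0 1 x
      = ∫ t in S ∩ Set.Ioo (0:ℝ) 1,
          |lam| / Real.sqrt (2 * π * t * (1 - t) ^ 3) *
            Real.exp (-(lam ^ 2 * t) / (2 * (1 - t))) := by
    rw [hsplit, hneg_eq, hpos_eq, ← two_mul,
      setIntegral_congr_fun hs_meas hpoint]
    simp only [smul_eq_mul]
    rw [integral_const_mul]
  rw [gaussianReal_apply_eq_integral 0 one_ne_zero A, hfinal]
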